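/- Let I = Up({\alpha}) = { \alpha + u : u \in S } and J = Up({\beta_1, ..., \beta_n}) be ideal sets of S = M^1_{\geq 0} \times \cdots \times M^d_{\geq 0}. For each j let \beta'_j be the componentwise maximum of \beta_j and \alpha. Then inf { |\alpha - \gamma| : \gamma \in J } = min { |\alpha - \beta'_j| : 1 \leq j \leq n }, where |\cdot| is the Euclidean norm on \mathbb{R}^d. -/
import Mathlib


/-- The semigroup `S = M^1_{≥0} × ⋯ × M^d_{≥0}`, realized as a subset of `Fin d → ℝ`. -/
def Sset {d : ℕ} (M : Fin d → AddSubgroup ℝ) : Set (Fin d → ℝ) :=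
  {s | ∀ i, s i ∈ M i ∧ 0 ≤ s i}

/-- The "monomial ideal set" (up-set) generated by `T ⊆ S`. -/
def Up {d : ℕ} (M : Fin d → AddSubgroup ℝ) (T : Set (Fin d → ℝ)) : Set (Fin d → ℝ) :=
  {s | ∃ t ∈ T, ∃ u ∈ Sset M, s = t + u}

/-- An ideal set of `S`: a subset of `S` closed under adding arbitrary elements of `S`. -/
def IsIdealSet {d : ℕ} (M : Fin d → AddSubgroup ℝ) (I : Set (Fin d → ℝ)) : Prop :=
  I ⊆ Sset M ∧ ∀ s ∈ I, ∀ u ∈ Sset M, s + u ∈ I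

/-- The m-prime ideal set `Q_T = {s ∈ S | s i > 0 for some i ∈ T}`. -/
def QT {d : ℕ} (M : Fin d → AddSubgroup ℝ) (T : Finset (Fin d)) : Set (Fin d → ℝ) :=
  {s ∈ Sset M | ∃ i ∈ T, 0 < s i}

/-- An m-prime ideal set: a proper ideal set `P` with `f + g ∈ P → f ∈ P ∨ g ∈ P`. -/
def IsMPrime {d : ℕ} (M : Fin d → AddSubgroup ℝ) (P : Set (Fin d → ℝ)) : Prop :=
  IsIdealSet M P ∧ P ≠ Sset M ∧
    ∀ f ∈ Sset M, ∀ g ∈ Sset M, f + g ∈ P → f ∈ P ∨ g ∈ P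

/-- An m-irreducible ideal set. -/
def MIrred {d : ℕ} (M : Fin d → AddSubgroup ℝ) (I : Set (Fin d → ℝ)) : Prop :=
  IsIdealSet M I ∧ I ≠ Sset M ∧
    ∀ J K : Set (Fin d → ℝ), IsIdealSet M J → IsIdealSet M K → I = J ∩ K → I = J ∨ I = K

/-- Monomial Krull dimension: `sup {d - |T| : Q_T ⊇ I}` (m-primes are exactly the `Q_T`). -/
noncomputable def mdim {d : ℕ} (M : Fin d → AddSubgroup ℝ) (I : Set (Fin d → ℝ)) : ℕ :=
  sSup {n : ℕ | ∃ T : Finset (Fin d), I ⊆ QT M T ∧ n = d - T.card}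

/-- Euclidean distance between exponent vectors. -/
noncomputable def myDist {d : ℕ} (γ δ : Fin d → ℝ) : ℝ :=
  Real.sqrt (∑ i, (γ i - δ i) ^ 2)

/-- `dist(I,J) < ε` in the sense of Definition 4.5 of the paper. -/
def DistLT {d : ℕ} (ε : ℝ) (I J : Set (Fin d → ℝ)) : Prop :=
  (∀ γ ∈ I, ∃ δ ∈ J, myDist γ δ < ε) ∧ (∀ δ ∈ J, ∃ γ ∈ I, myDist γ δ < ε)

/-- Distance between ideal sets (Definition 4.6). -/
noncomputable def idealDist {d : ℕ} (I J : Set (Fin d → ℝ)) : ℝ :=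
  sInf {ε : ℝ | 0 < ε ∧ DistLT ε I J}

/-- Finitely generated ideal set. -/
def IsFG {d : ℕ} (M : Fin d → AddSubgroup ℝ) (I : Set (Fin d → ℝ)) : Prop :=
  ∃ G : Finset (Fin d → ℝ), ↑G ⊆ Sset M ∧ I = Up M ↑G

/-- for `I = Up({α})` and `J = Up({β₁,…,βₙ})`, with `β'ⱼ` the
componentwise max of `βⱼ` and `α`, one has
`inf {|α - γ| : γ ∈ J} = min_j |α - β'ⱼ|`. -/
theorem stmt15 (d n : ℕ) (hn : 0 < n) (M : Fin d → AddSubgroup ℝ) (hM : ∀ i, M i ≠ ⊥)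
    (α : Fin d → ℝ) (hα : α ∈ Sset M)
    (β : Fin n → Fin d → ℝ) (hβ : ∀ j, β j ∈ Sset M) :
    sInf {x : ℝ | ∃ γ ∈ Up M (Set.range β), x = myDist α γ} =
      Finset.univ.inf' (Finset.univ_nonempty_iff.mpr ⟨⟨0, hn⟩⟩)
        (fun j => myDist α (fun i => max (β j i) (α i))) := by

  classical
  set A : Set ℝ := {x : ℝ | ∃ γ ∈ Up M (Set.range β), x = myDist α γ} with hA
  -- each β'ⱼ is in Up M (range β)
  have hmem : ∀ j : Fin n, (fun i => max (β j i) (α i)) ∈ Up M (Set.range β) := by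
    intro j
    refine ⟨β j, ⟨j, rfl⟩, (fun i => max (β j i) (α i) - β j i), ?_, ?_⟩
    · intro i
      constructor
      · show β j i ⊔ α i - β j i ∈ M i
        rcases le_total (α i) (β j i) with h | h
        · rw [max_eq_left h, sub_self]; exact zero_mem _
        · rw [max_eq_right h]
          exact AddSubgroup.sub_mem _ ((hα i).1) ((hβ j i).1)
      · show 0 ≤ β j i ⊔ α i - β j i
        exact sub_nonneg.mpr (le_max_left (β j i) (α i))
    · funext i
      show β j i ⊔ α i = β j i + (β j i ⊔ α i - β j i)
      ring
  -- monotonicity: dist to β'ⱼ is ≤ dist to β j + u for u ≥ 0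
  have key : ∀ (j : Fin n) (u : Fin d → ℝ), (∀ i, 0 ≤ u i) →
      myDist α (fun i => max (β j i) (α i)) ≤ myDist α (β j + u) := by
    intro j u hu
    apply Real.sqrt_le_sqrt
    apply Finset.sum_le_sum
    intro i _
    show (α i - (β j i ⊔ α i)) ^ 2 ≤ (α i - (β j i + u i)) ^ 2
    rcases le_total (β j i) (α i) with h | h
    · rw [max_eq_right h, sub_self]
      simpa using sq_nonneg (α i - (β j i + u i))
    · rw [max_eq_left h]
      have hb : (α i - (β j i + u i)) ^ 2 = (β j i + u i - α i) ^ 2 := by ring_nf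
      rw [hb]
      apply sq_le_sq'
      · have := hu i; simp only [neg_sub]; linarith
      · have := hu i; linarith
  have hne : A.Nonempty := ⟨_, ⟨_, hmem ⟨0, hn⟩, rfl⟩⟩
  have hbdd : BddBelow A := by
    refine ⟨0, ?_⟩
    rintro x ⟨γ, _, rfl⟩
    exact Real.sqrt_nonneg _
  apply le_antisymm
  · obtain ⟨j, -, hj⟩ := Finset.exists_mem_eq_inf' (Finset.univ_nonempty_iff.mpr ⟨(⟨0, hn⟩ : Fin n)⟩) (fun j => myDist α (fun i => max (β j i) (α i)))
    rw [hj]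
    exact csInf_le hbdd ⟨_, hmem j, rfl⟩
  · apply le_csInf hne
    rintro x ⟨γ, ⟨t, ⟨j, rfl⟩, u, hu, rfl⟩, rfl⟩
    exact le_trans (Finset.inf'_le _ (Finset.mem_univ j)) (key j u (fun i => (hu i).2))
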